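/- A ring R is strongly 2-nil-clean if and only if every square element of R is the sum of two idempotents and a nilpotent that pairwise commute. -/

import Mathlib

/-- A ring is strongly 2-nil-clean if every element is the sum of two
idempotents and a nilpotent that pairwise commute. -/
def Strongly2NilClean (R : Type*) [Ring R] : Prop :=
  ∀ a : R, ∃ e f w : R, IsIdempotentElem e ∧ IsIdempotentElem f ∧ IsNilpotent w ∧
    Commute e f ∧ Commute e w ∧ Commute f w ∧ a = e + f + w

section Helpers

lemma nil_of_sq_nil {S : Type*} [Monoid S] [Zero S] {x : S} (h : IsNilpotent (x ^ 2)) :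
    IsNilpotent x := by
  obtain ⟨n, hn⟩ := h
  exact ⟨2 * n, by rw [pow_mul]; exact hn⟩

lemma newton_lift {S : Type*} [CommRing S] :
    ∀ n : ℕ, ∀ x : S, (x - x ^ 2) ^ n = 0 →
      ∃ e : S, IsIdempotentElem e ∧ IsNilpotent (e - x) := by
  intro n
  induction n using Nat.strong_induction_on with
  | _ n ih =>
    rcases n with _ | _ | n
    · intro x hx
      rw [pow_zero] at hx
      have hx0 : x = 0 := by
        calc x = x * 1 := (mul_one x).symm
        _ = x * 0 := by rw [hx]
        _ = 0 := mul_zero x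
      exact ⟨0, by simp [IsIdempotentElem], by simp [hx0]⟩
    · intro x hx
      rw [pow_one, sub_eq_zero] at hx
      refine ⟨x, ?_, by simp⟩
      show x * x = x
      rw [← sq, ← hx]
    · intro x hx
      have hkey : ((3 * x ^ 2 - 2 * x ^ 3) - (3 * x ^ 2 - 2 * x ^ 3) ^ 2) ^ (n + 1) = 0 := by
        have h1 : (3 * x ^ 2 - 2 * x ^ 3) - (3 * x ^ 2 - 2 * x ^ 3) ^ 2
            = (x - x ^ 2) ^ 2 * (3 + 4 * x - 4 * x ^ 2) := by ring
        have h2 : (x - x ^ 2) ^ (2 * (n + 1)) = 0 := by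
          have h3 : 2 * (n + 1) = (n + 2) + n := by ring
          rw [h3, pow_add, hx, zero_mul]
        rw [h1, mul_pow, ← pow_mul, h2, zero_mul]
      obtain ⟨e, he, hen⟩ := ih (n + 1) (by omega) _ hkey
      refine ⟨e, he, ?_⟩
      have h1 : IsNilpotent ((3 * x ^ 2 - 2 * x ^ 3) - x) := by
        have h2 : (3 * x ^ 2 - 2 * x ^ 3) - x = (x - x ^ 2) * (2 * x - 1) := by ring
        rw [h2]
        exact (Commute.all _ _).isNilpotent_mul_right ⟨n + 2, hx⟩
      have h3 : e - x = (e - (3 * x ^ 2 - 2 * x ^ 3)) + ((3 * x ^ 2 - 2 * x ^ 3) - x) := by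
        ring
      rw [h3]
      exact (Commute.all _ _).isNilpotent_add hen h1

lemma newton_lift' {S : Type*} [CommRing S] (x : S) (h : IsNilpotent (x - x ^ 2)) :
    ∃ e : S, IsIdempotentElem e ∧ IsNilpotent (e - x) := by
  obtain ⟨n, hn⟩ := h
  exact newton_lift n x hn

lemma comm_decomp {S : Type*} [CommRing S] (a : S) (h6 : IsNilpotent (6 : S))
    (hq : IsNilpotent (a ^ 2 * (a ^ 2 - 1) * (a ^ 2 - 2)))
    (hq1 : IsNilpotent ((a + 1) ^ 2 * ((a + 1) ^ 2 - 1) * ((a + 1) ^ 2 - 2))) :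
    ∃ e f w : S, IsIdempotentElem e ∧ IsIdempotentElem f ∧ IsNilpotent w ∧
      a = e + f + w := by
  rw [← mem_nilradical] at h6 hq hq1
  -- Step 1: a(a-1)(a-2) is nilpotent, via a Bezout certificate over ℤ[t]
  have hp : a * (a - 1) * (a - 2) ∈ nilradical S := by
    rw [mem_nilradical]
    apply nil_of_sq_nil
    rw [← mem_nilradical]
    have hcert : (a * (a - 1) * (a - 2)) ^ 2
        = (4 * a ^ 3 + 8 * a + 3) * (a ^ 2 * (a ^ 2 - 1) * (a ^ 2 - 2))
          + (8 * a ^ 3 + 4 * a) * ((a + 1) ^ 2 * ((a + 1) ^ 2 - 1) * ((a + 1) ^ 2 - 2))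
          + (-2 * a ^ 9 - 8 * a ^ 8 - 16 * a ^ 7 - 15 * a ^ 6 - 5 * a ^ 5 + a ^ 4
              - 4 * a ^ 3 + a ^ 2) * 6 := by ring
    rw [hcert]
    exact add_mem (add_mem (Ideal.mul_mem_left _ _ hq) (Ideal.mul_mem_left _ _ hq1))
      (Ideal.mul_mem_left _ _ h6)
  set u : S := a - 1 with hu_def
  have hu3 : u ^ 3 - u ∈ nilradical S := by
    have h1 : u ^ 3 - u = a * (a - 1) * (a - 2) := by rw [hu_def]; ring
    rw [h1]; exact hp
  have hu4 : u ^ 4 - u ^ 2 ∈ nilradical S := by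
    have h1 : u ^ 4 - u ^ 2 = u * (u ^ 3 - u) := by ring
    rw [h1]; exact Ideal.mul_mem_left _ _ hu3
  -- Step 2: the central idempotent ε ≈ 3
  obtain ⟨ε, hε, hε3⟩ : ∃ e : S, IsIdempotentElem e ∧ IsNilpotent (e - 3) := by
    apply newton_lift'
    have h1 : (3 : S) - 3 ^ 2 = (-1) * 6 := by ring
    rw [h1, ← mem_nilradical]
    exact Ideal.mul_mem_left _ _ h6
  have hε2 : ε ^ 2 = ε := by rw [sq]; exact hε
  rw [← mem_nilradical] at hε3
  have n2ε : 2 * ε ∈ nilradical S := by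
    have h1 : 2 * ε = 2 * (ε - 3) + 6 := by ring
    rw [h1]; exact add_mem (Ideal.mul_mem_left _ _ hε3) h6
  have n3ε' : 3 * (1 - ε) ∈ nilradical S := by
    have h1 : 3 * (1 - ε) = (-3) * (ε - 3) + (-1) * 6 := by ring
    rw [h1]; exact add_mem (Ideal.mul_mem_left _ _ hε3) (Ideal.mul_mem_left _ _ h6)
  -- Step 3: (u^2-u)ε is nilpotent
  have m1 : (u ^ 2 - u) * ε ∈ nilradical S := by
    rw [mem_nilradical]
    apply nil_of_sq_nil
    rw [← mem_nilradical]
    have h1 : ((u ^ 2 - u) * ε) ^ 2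
        = ε * (u ^ 4 - u ^ 2) + (-2 * ε) * (u ^ 3 - u) + (u ^ 2 - u) * (2 * ε) := by
      linear_combination (u ^ 2 - u) ^ 2 * hε2
    rw [h1]
    exact add_mem (add_mem (Ideal.mul_mem_left _ _ hu4) (Ideal.mul_mem_left _ _ hu3))
      (Ideal.mul_mem_left _ _ n2ε)
  -- Step 4: lift the two pre-idempotents
  set E : S := u * ε + 2 * (u ^ 2 + u) * (1 - ε) with hE_def
  set F : S := 1 - 2 * (u ^ 2 - u) * (1 - ε) with hF_def
  have hEpre : IsNilpotent (E - E ^ 2) := by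
    rw [← mem_nilradical]
    have h1 : E - E ^ 2 = (-1) * ((u ^ 2 - u) * ε) + (-4 * (1 - ε)) * (u ^ 4 - u ^ 2)
        + (-8 * (1 - ε)) * (u ^ 3 - u) + (-(u ^ 2 + u) * (1 - ε)) * 6 := by
      rw [hE_def]
      linear_combination (-(u ^ 2) - 4 * u ^ 3 - 4 * u ^ 4) * hε2
    rw [h1]
    exact add_mem (add_mem (add_mem (Ideal.mul_mem_left _ _ m1) (Ideal.mul_mem_left _ _ hu4))
      (Ideal.mul_mem_left _ _ hu3)) (Ideal.mul_mem_left _ _ h6)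
  have hFpre : IsNilpotent (F - F ^ 2) := by
    rw [← mem_nilradical]
    have h1 : F - F ^ 2 = (-4 * (1 - ε)) * (u ^ 4 - u ^ 2) + (8 * (1 - ε)) * (u ^ 3 - u)
        + (-(u ^ 2 - u) * (1 - ε)) * 6 := by
      rw [hF_def]
      linear_combination (-4 * u ^ 4 + 8 * u ^ 3 - 4 * u ^ 2) * hε2
    rw [h1]
    exact add_mem (add_mem (Ideal.mul_mem_left _ _ hu4) (Ideal.mul_mem_left _ _ hu3))
      (Ideal.mul_mem_left _ _ h6)
  obtain ⟨e, he, heE⟩ := newton_lift' E hEpre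
  obtain ⟨f, hf, hfF⟩ := newton_lift' F hFpre
  rw [← mem_nilradical] at heE hfF
  refine ⟨e, f, a - e - f, he, hf, ?_, by ring⟩
  rw [← mem_nilradical]
  have hw : a - E - F = (-u) * (3 * (1 - ε)) := by rw [hE_def, hF_def, hu_def]; ring
  have h1 : a - e - f = (a - E - F) + (-1) * (e - E) + (-1) * (f - F) := by ring
  rw [h1, hw]
  exact add_mem (add_mem (Ideal.mul_mem_left _ _ n3ε') (Ideal.mul_mem_left _ _ heE))
    (Ideal.mul_mem_left _ _ hfF)

lemma coe_isNilpotent_iff {R : Type*} [Ring R] {A : Subalgebra ℤ R} {x : A} :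
    IsNilpotent (x : R) ↔ IsNilpotent x := by
  constructor
  · rintro ⟨n, hn⟩
    refine ⟨n, Subtype.ext ?_⟩
    push_cast
    simpa using hn
  · rintro ⟨n, hn⟩
    refine ⟨n, ?_⟩
    have := congrArg (Subtype.val) hn
    push_cast at this
    simpa using this

lemma spectral {R : Type*} [Ring R] {e f w : R} (he : IsIdempotentElem e)
    (hf : IsIdempotentElem f) (hw : IsNilpotent w) (hef : Commute e f)
    (hew : Commute e w) (hfw : Commute f w) :
    IsNilpotent ((e + f + w) * ((e + f + w) - 1) * ((e + f + w) - 2)) := by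
  set s : Set R := {e, f, w} with hs_def
  have hcomm : ∀ x ∈ s, ∀ y ∈ s, x * y = y * x := by
    intro x hx y hy
    simp only [hs_def, Set.mem_insert_iff, Set.mem_singleton_iff] at hx hy
    rcases hx with rfl | rfl | rfl <;> rcases hy with rfl | rfl | rfl <;>
      first
        | rfl
        | exact hef.eq
        | exact hef.symm.eq
        | exact hew.eq
        | exact hew.symm.eq
        | exact hfw.eq
        | exact hfw.symm.eq
  letI : CommRing (Algebra.adjoin ℤ s) := Algebra.adjoinCommRingOfComm ℤ hcomm
  let e' : Algebra.adjoin ℤ s := ⟨e, Algebra.subset_adjoin (by simp [hs_def])⟩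
  let f' : Algebra.adjoin ℤ s := ⟨f, Algebra.subset_adjoin (by simp [hs_def])⟩
  let w' : Algebra.adjoin ℤ s := ⟨w, Algebra.subset_adjoin (by simp [hs_def])⟩
  have he' : e' * e' = e' := Subtype.ext he
  have hf' : f' * f' = f' := Subtype.ext hf
  have hw' : IsNilpotent w' := coe_isNilpotent_iff.mp hw
  have key : (e' + f') * ((e' + f') - 1) * ((e' + f') - 2) = 0 := by
    linear_combination (e' + 3 * f' - 2) * he' + (3 * e' + f' - 2) * hf'
  have hnil : IsNilpotent ((e' + f' + w') * ((e' + f' + w') - 1) * ((e' + f' + w') - 2)) := by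
    have hsplit : (e' + f' + w') * ((e' + f' + w') - 1) * ((e' + f' + w') - 2)
        = (e' + f') * ((e' + f') - 1) * ((e' + f') - 2)
          + w' * (3 * (e' + f') ^ 2 + 3 * (e' + f') * w' + w' ^ 2
              - 6 * (e' + f') - 3 * w' + 2) := by ring
    rw [hsplit, key, zero_add]
    exact (Commute.all _ _).isNilpotent_mul_right hw'
  have hcast : ((e' + f' + w') * ((e' + f' + w') - 1) * ((e' + f' + w') - 2) : R)
      = (e + f + w) * ((e + f + w) - 1) * ((e + f + w) - 2) := by
    push_cast
    rfl
  rw [← hcast]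
  exact coe_isNilpotent_iff.mpr hnil

lemma ring_decomp {R : Type*} [Ring R] (a : R) (h6 : IsNilpotent (6 : R))
    (hq : IsNilpotent (a ^ 2 * (a ^ 2 - 1) * (a ^ 2 - 2)))
    (hq1 : IsNilpotent ((a + 1) ^ 2 * ((a + 1) ^ 2 - 1) * ((a + 1) ^ 2 - 2))) :
    ∃ e f w : R, IsIdempotentElem e ∧ IsIdempotentElem f ∧ IsNilpotent w ∧
      Commute e f ∧ Commute e w ∧ Commute f w ∧ a = e + f + w := by
  set s : Set R := {a} with hs_def
  have hcomm : ∀ x ∈ s, ∀ y ∈ s, x * y = y * x := by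
    intro x hx y hy
    simp only [hs_def, Set.mem_singleton_iff] at hx hy
    subst hx; subst hy; rfl
  letI : CommRing (Algebra.adjoin ℤ s) := Algebra.adjoinCommRingOfComm ℤ hcomm
  let a' : Algebra.adjoin ℤ s := ⟨a, Algebra.subset_adjoin (by simp [hs_def])⟩
  have ha' : (a' : R) = a := rfl
  have h6' : IsNilpotent (6 : Algebra.adjoin ℤ s) := by
    apply coe_isNilpotent_iff.mp
    have : ((6 : Algebra.adjoin ℤ s) : R) = 6 := rfl
    rw [this]; exact h6
  have hq' : IsNilpotent (a' ^ 2 * (a' ^ 2 - 1) * (a' ^ 2 - 2)) := by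
    apply coe_isNilpotent_iff.mp
    have : ((a' ^ 2 * (a' ^ 2 - 1) * (a' ^ 2 - 2) : Algebra.adjoin ℤ s) : R)
        = a ^ 2 * (a ^ 2 - 1) * (a ^ 2 - 2) := by push_cast; rfl
    rw [this]; exact hq
  have hq1' : IsNilpotent ((a' + 1) ^ 2 * ((a' + 1) ^ 2 - 1) * ((a' + 1) ^ 2 - 2)) := by
    apply coe_isNilpotent_iff.mp
    have : (((a' + 1) ^ 2 * ((a' + 1) ^ 2 - 1) * ((a' + 1) ^ 2 - 2) : Algebra.adjoin ℤ s) : R)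
        = (a + 1) ^ 2 * ((a + 1) ^ 2 - 1) * ((a + 1) ^ 2 - 2) := by push_cast; rfl
    rw [this]; exact hq1
  obtain ⟨e, f, w, he, hf, hw, hsum⟩ := comm_decomp a' h6' hq' hq1'
  refine ⟨e, f, w, ?_, ?_, ?_, ?_, ?_, ?_, ?_⟩
  · show (e : R) * e = e
    exact congrArg Subtype.val he
  · show (f : R) * f = f
    exact congrArg Subtype.val hf
  · exact coe_isNilpotent_iff.mpr hw
  · exact congrArg Subtype.val (mul_comm e f)
  · exact congrArg Subtype.val (mul_comm e w)
  · exact congrArg Subtype.val (mul_comm f w)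
  · have := congrArg Subtype.val hsum
    push_cast at this
    exact this

end Helpers

theorem stmt_4 (R : Type*) [Ring R] :
    Strongly2NilClean R ↔
      ∀ x : R, ∃ e f w : R, IsIdempotentElem e ∧ IsIdempotentElem f ∧ IsNilpotent w ∧
        Commute e f ∧ Commute e w ∧ Commute f w ∧ x ^ 2 = e + f + w := by
  constructor
  · intro h x
    exact h (x ^ 2)
  · intro H
    intro a
    have spec : ∀ x : R, IsNilpotent (x ^ 2 * (x ^ 2 - 1) * (x ^ 2 - 2)) := by
      intro x
      obtain ⟨e, f, w, he, hf, hw, hef, hew, hfw, hx⟩ := H x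
      rw [hx]
      exact spectral he hf hw hef hew hfw
    have h24 : IsNilpotent ((24 : R)) := by
      have h1 : (2 : R) ^ 2 * ((2 : R) ^ 2 - 1) * ((2 : R) ^ 2 - 2) = 24 := by norm_num
      rw [← h1]
      exact spec 2
    have h6 : IsNilpotent (6 : R) := by
      obtain ⟨n, hn⟩ := h24
      refine ⟨4 * n, ?_⟩
      have c : Commute (54 : R) (24 : R) := by
        show (54 : R) * 24 = 24 * 54
        norm_num
      have h64 : (6 : R) ^ 4 = 54 * 24 := by norm_num
      calc (6 : R) ^ (4 * n) = ((6 : R) ^ 4) ^ n := by rw [pow_mul]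
      _ = ((54 : R) * 24) ^ n := by rw [h64]
      _ = 54 ^ n * 24 ^ n := c.mul_pow n
      _ = 0 := by rw [hn, mul_zero]
    exact ring_decomp a h6 (spec a) (spec (a + 1))
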